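/- Let m ≥ 1 and let D, S ⊆ {1,…,m} be sets of positive integers with m ∈ D, m ∈ S, and at least one of D, S equal to {1,…,m}. Let G be a finite simple graph, G' a finite simple graph with V(G) ⊆ V(G'), and Blue_0, Red_0 disjoint subsets of V(G') \ V(G) such that: (a) every vertex of V(G') \ (V(G) ∪ Blue_0 ∪ Red_0) is at graph distance at most m in G' from some vertex of Blue_0 and at distance at most m from some vertex of Red_0; (b) every vertex of V(G) is at distance at least m+1 from every vertex of Blue_0 ∪ Red_0; (c) for distinct u, v ∈ V(G), dist_{G'}(u,v) = m if uv is an edge of G, and dist_{G'}(u,v) ≥ m+1 otherwise; (d) any two distinct vertices of Blue_0 ∪ Red_0 are at distance at least m+1. Then the distance game D⟨D,S⟩ on G' starting from the position with blue pieces on Blue_0 and red pieces on Red_0 is play-for-play equivalent to Node-Kayles on G starting from the empty position: in every reachable position the sets of vertices legally playable by Left and by Right coincide and equal the set of unoccupied vertices of V(G) that are not G-adjacent to any occupied vertex of V(G); in particular the player moving first (respectively, second) has a winning strategy in one game if and only if in the other. -/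

import Mathlib

universe w

namespace SetTheory

/-- Pre-games, as in the older Mathlib's `SetTheory.PGame` (removed from Mathlib since). -/
inductive PGame : Type (w + 1)
  | mk : ∀ α β : Type w, (α → PGame) → (β → PGame) → PGame

namespace PGame

def LeftMoves : PGame → Type w
  | mk l _ _ _ => l

def RightMoves : PGame → Type w
  | mk _ r _ _ => r

def moveLeft : ∀ g : PGame, LeftMoves g → PGame
  | mk _l _ L _ => L

def moveRight : ∀ g : PGame, RightMoves g → PGame
  | mk _ _r _ R => R

/-- The pair `(x ≤ y, x ⧏ y)`, defined by simultaneous recursion. -/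
noncomputable def leLF (x : PGame.{w}) : PGame.{w} → Prop × Prop :=
  PGame.rec (motive := fun _ => PGame.{w} → Prop × Prop)
    (fun xl xr xL xR IHxl IHxr y =>
      PGame.rec (motive := fun _ => Prop × Prop)
        (fun yl yr yL yR IHyl IHyr =>
          ((∀ i, (IHxl i (mk yl yr yL yR)).2) ∧ ∀ j, (IHyr j).2,
            (∃ i, (IHyl i).1) ∨ ∃ j, (IHxr j (mk yl yr yL yR)).1))
        y)
    x

noncomputable instance : LE PGame.{w} :=
  ⟨fun x y => (leLF x y).1⟩

/-- `x ⧏ y` means `¬ y ≤ x`, as in the older Mathlib. -/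
def LF (x y : PGame.{w}) : Prop :=
  ¬y ≤ x

infixl:50 " ⧏ " => PGame.LF

instance : Zero PGame :=
  ⟨⟨PEmpty, PEmpty, PEmpty.elim, PEmpty.elim⟩⟩

/-- Relabellings, as in the older Mathlib. -/
inductive Relabelling : PGame.{w} → PGame.{w} → Type (w + 1)
  | mk : ∀ {x y : PGame} (L : x.LeftMoves ≃ y.LeftMoves) (R : x.RightMoves ≃ y.RightMoves),
      (∀ i, Relabelling (x.moveLeft i) (y.moveLeft (L i))) →
        (∀ j, Relabelling (x.moveRight j) (y.moveRight (R j))) → Relabelling x y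

infixl:50 " ≡r " => PGame.Relabelling

end PGame

end SetTheory

open SimpleGraph SetTheory

/-- In the distance game `D⟨D,S⟩` on the graph `G`, from the position with blue pieces on
`blue` and red pieces on `red`, Left may legally place a blue piece on the vertex `v`. -/
def LeftMove {W : Type*} (G : SimpleGraph W) (D S : Set ℕ) (blue red : Finset W) (v : W) : Prop :=
  v ∉ blue ∧ v ∉ red ∧ (∀ r ∈ red, ∀ d ∈ D, G.edist v r ≠ (d : ℕ∞)) ∧
    ∀ b ∈ blue, ∀ s ∈ S, G.edist v b ≠ (s : ℕ∞)

/-- Right may legally place a red piece on the vertex `v`. -/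
def RightMove {W : Type*} (G : SimpleGraph W) (D S : Set ℕ) (blue red : Finset W) (v : W) : Prop :=
  v ∉ blue ∧ v ∉ red ∧ (∀ b ∈ blue, ∀ d ∈ D, G.edist v b ≠ (d : ℕ∞)) ∧
    ∀ r ∈ red, ∀ s ∈ S, G.edist v r ≠ (s : ℕ∞)

/-- The distance game `D⟨D,S⟩` on `G` from the position `(blue, red)`, as a combinatorial
game (normal play: a player with no legal move loses). -/
def distGame {W : Type*} [Fintype W] [DecidableEq W] (G : SimpleGraph W) (D S : Set ℕ)
    (blue red : Finset W) : PGame :=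
  PGame.mk {v // LeftMove G D S blue red v} {v // RightMove G D S blue red v}
    (fun x => distGame G D S (insert x.1 blue) red)
    (fun x => distGame G D S blue (insert x.1 red))
termination_by ((blue ∪ red)ᶜ).card
decreasing_by
  · obtain ⟨h1, h2, -, -⟩ := x.2
    calc ((insert x.1 blue ∪ red)ᶜ).card
        = (((blue ∪ red)ᶜ).erase x.1).card := by
          rw [Finset.insert_union, Finset.compl_insert]
      _ < ((blue ∪ red)ᶜ).card :=
          Finset.card_erase_lt_of_mem (Finset.mem_compl.2 (by simp [h1, h2]))
  · obtain ⟨h1, h2, -, -⟩ := x.2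
    calc ((blue ∪ insert x.1 red)ᶜ).card
        = (((blue ∪ red)ᶜ).erase x.1).card := by
          rw [Finset.union_insert, Finset.compl_insert]
      _ < ((blue ∪ red)ᶜ).card :=
          Finset.card_erase_lt_of_mem (Finset.mem_compl.2 (by simp [h1, h2]))

/-- `BiGraph-Node-Kayles` on a bipartite graph `G` with parts `VL`, `VR`, from the position
where `occ` is the set of occupied vertices: players alternately occupy vertices that are
neither equal nor adjacent to a previously occupied vertex, Left occupying only vertices of
`VL` and Right only vertices of `VR`; a player with no legal move loses. -/
def bnkGame {V : Type*} [Fintype V] [DecidableEq V] (G : SimpleGraph V) (VL VR : Finset V)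
    (occ : Finset V) : PGame :=
  PGame.mk {v // v ∈ VL ∧ v ∉ occ ∧ ∀ u ∈ occ, ¬G.Adj v u}
    {v // v ∈ VR ∧ v ∉ occ ∧ ∀ u ∈ occ, ¬G.Adj v u}
    (fun x => bnkGame G VL VR (insert x.1 occ))
    (fun x => bnkGame G VL VR (insert x.1 occ))
termination_by occᶜ.card
decreasing_by
  all_goals
  · obtain ⟨-, h1, -⟩ := x.2
    calc ((insert x.1 occ)ᶜ).card = (occᶜ.erase x.1).card := by rw [Finset.compl_insert]
      _ < occᶜ.card := Finset.card_erase_lt_of_mem (Finset.mem_compl.2 h1)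

universe u

/-- Characterization of legal moves (one-sided; apply twice by symmetry). -/
theorem moveChar {V W : Type u} (m : ℕ) (D S : Set ℕ)
    (hD : D ⊆ Set.Icc 1 m) (hS : S ⊆ Set.Icc 1 m) (hmD : m ∈ D) (hmS : m ∈ S)
    (hfull : D = Set.Icc 1 m ∨ S = Set.Icc 1 m)
    (G : SimpleGraph V) (G' : SimpleGraph W) (ι : V ↪ W)
    (P Q : Finset W) [DecidableEq W] [DecidableEq V]
    (hP0 : ∀ v : V, ι v ∉ P) (hQ0 : ∀ v : V, ι v ∉ Q)
    (ha : ∀ w : W, (∀ v : V, ι v ≠ w) → w ∉ P → w ∉ Q →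
      (∃ b ∈ P, G'.edist w b ≤ (m : ℕ∞)) ∧ (∃ r ∈ Q, G'.edist w r ≤ (m : ℕ∞)))
    (hb : ∀ v : V, ∀ w ∈ P ∪ Q, (m : ℕ∞) + 1 ≤ G'.edist (ι v) w)
    (hc : ∀ u v : V, u ≠ v →
      (G.Adj u v → G'.edist (ι u) (ι v) = (m : ℕ∞)) ∧
      (¬G.Adj u v → (m : ℕ∞) + 1 ≤ G'.edist (ι u) (ι v)))
    (B R : Finset V) (w : W) :
    LeftMove G' D S (P ∪ B.map ι) (Q ∪ R.map ι) w ↔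
      ∃ x : V, w = ι x ∧ x ∉ B ∪ R ∧ ∀ u ∈ B ∪ R, ¬G.Adj x u := by
  have hlt : ∀ d ∈ Set.Icc 1 m, (d : ℕ∞) < (m : ℕ∞) + 1 := by
    intro d hd
    have : (d : ℕ∞) < ((m + 1 : ℕ) : ℕ∞) := by exact_mod_cast Nat.lt_succ_of_le hd.2
    simpa [Nat.cast_add] using this
  constructor
  · rintro ⟨hwb, hwr, hDred, hSblue⟩
    -- first: w is in the image of ι
    by_cases him : ∃ x : V, ι x = w
    · obtain ⟨x, rfl⟩ := him
      have hxB : x ∉ B := fun h => hwb (Finset.mem_union_right _ (Finset.mem_map_of_mem ι h))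
      have hxR : x ∉ R := fun h => hwr (Finset.mem_union_right _ (Finset.mem_map_of_mem ι h))
      refine ⟨x, rfl, by simp [hxB, hxR], ?_⟩
      intro u hu hadj
      have hne : x ≠ u := hadj.ne
      have hdist : G'.edist (ι x) (ι u) = (m : ℕ∞) := (hc x u hne).1 hadj
      rcases Finset.mem_union.1 hu with hu | hu
      · exact hSblue (ι u) (Finset.mem_union_right _ (Finset.mem_map_of_mem ι hu)) m hmS hdist
      · exact hDred (ι u) (Finset.mem_union_right _ (Finset.mem_map_of_mem ι hu)) m hmD hdist
    · exfalso
      push_neg at him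
      have hwP : w ∉ P := fun h => hwb (Finset.mem_union_left _ h)
      have hwQ : w ∉ Q := fun h => hwr (Finset.mem_union_left _ h)
      obtain ⟨⟨b, hbP, hbd⟩, ⟨r, hrQ, hrd⟩⟩ := ha w him hwP hwQ
      rcases hfull with hfull | hfull
      · -- use the red piece r ∈ Q and D = Icc 1 m
        have hne : w ≠ r := fun h => hwQ (h ▸ hrQ)
        have htop : G'.edist w r ≠ ⊤ := (lt_of_le_of_lt hrd (by simp)).ne
        set d := (G'.edist w r).toNat with hdd
        have hcd : (d : ℕ∞) = G'.edist w r := ENat.coe_toNat htop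
        have hd1 : 1 ≤ d := Nat.one_le_iff_ne_zero.2 fun h0 =>
          hne (SimpleGraph.edist_eq_zero_iff.1 (by rw [← hcd, h0]; rfl))
        have hdm : d ≤ m := by exact_mod_cast hcd ▸ hrd
        exact hDred r (Finset.mem_union_left _ hrQ) d (hfull ▸ ⟨hd1, hdm⟩) hcd.symm
      · have hne : w ≠ b := fun h => hwP (h ▸ hbP)
        have htop : G'.edist w b ≠ ⊤ := (lt_of_le_of_lt hbd (by simp)).ne
        set d := (G'.edist w b).toNat with hdd
        have hcd : (d : ℕ∞) = G'.edist w b := ENat.coe_toNat htop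
        have hd1 : 1 ≤ d := Nat.one_le_iff_ne_zero.2 fun h0 =>
          hne (SimpleGraph.edist_eq_zero_iff.1 (by rw [← hcd, h0]; rfl))
        have hdm : d ≤ m := by exact_mod_cast hcd ▸ hbd
        exact hSblue b (Finset.mem_union_left _ hbP) d (hfull ▸ ⟨hd1, hdm⟩) hcd.symm
  · rintro ⟨x, rfl, hxBR, hadj⟩
    have hxB : x ∉ B := fun h => hxBR (Finset.mem_union_left _ h)
    have hxR : x ∉ R := fun h => hxBR (Finset.mem_union_right _ h)
    refine ⟨?_, ?_, ?_, ?_⟩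
    · simp [hP0 x, hxB]
    · simp [hQ0 x, hxR]
    · intro r hr d hdD
      have hdlt : (d : ℕ∞) < (m : ℕ∞) + 1 := hlt d (hD hdD)
      rcases Finset.mem_union.1 hr with hr | hr
      · exact (lt_of_lt_of_le hdlt (hb x r (Finset.mem_union_right _ hr))).ne'
      · obtain ⟨u, huR, rfl⟩ := Finset.mem_map.1 hr
        have hne : x ≠ u := fun h => hxR (h ▸ huR)
        have := (hc x u hne).2 (hadj u (Finset.mem_union_right _ huR))
        exact (lt_of_lt_of_le hdlt this).ne'
    · intro b hbm s hsS
      have hslt : (s : ℕ∞) < (m : ℕ∞) + 1 := hlt s (hS hsS)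
      rcases Finset.mem_union.1 hbm with hbm | hbm
      · exact (lt_of_lt_of_le hslt (hb x b (Finset.mem_union_left _ hbm))).ne'
      · obtain ⟨u, huB, rfl⟩ := Finset.mem_map.1 hbm
        have hne : x ≠ u := fun h => hxB (h ▸ huB)
        have := (hc x u hne).2 (hadj u (Finset.mem_union_left _ huB))
        exact (lt_of_lt_of_le hslt this).ne'

theorem nkLeft {V : Type u} [DecidableEq V] (G : SimpleGraph V) (B R : Finset V) (x : V) :
    LeftMove G {1} ({1} : Set ℕ) B R x ↔ x ∉ B ∪ R ∧ ∀ u ∈ B ∪ R, ¬G.Adj x u := by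
  have h1 : ((1 : ℕ) : ℕ∞) = 1 := Nat.cast_one
  simp only [LeftMove, Set.mem_singleton_iff, forall_eq, Finset.mem_union, h1,
    ne_eq, SimpleGraph.edist_eq_one_iff_adj]
  constructor
  · rintro ⟨h1, h2, h3, h4⟩
    exact ⟨by tauto, fun u hu => hu.elim (fun h => h4 u h) (fun h => h3 u h)⟩
  · rintro ⟨h1, h2⟩
    exact ⟨fun h => h1 (Or.inl h), fun h => h1 (Or.inr h),
      fun r hr => h2 r (Or.inr hr), fun b hb => h2 b (Or.inl hb)⟩

theorem nkRight {V : Type u} [DecidableEq V] (G : SimpleGraph V) (B R : Finset V) (x : V) :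
    RightMove G {1} ({1} : Set ℕ) B R x ↔ x ∉ B ∪ R ∧ ∀ u ∈ B ∪ R, ¬G.Adj x u := by
  have h1 : ((1 : ℕ) : ℕ∞) = 1 := Nat.cast_one
  simp only [RightMove, Set.mem_singleton_iff, forall_eq, Finset.mem_union, h1,
    ne_eq, SimpleGraph.edist_eq_one_iff_adj]
  constructor
  · rintro ⟨h1, h2, h3, h4⟩
    exact ⟨by tauto, fun u hu => hu.elim (fun h => h3 u h) (fun h => h4 u h)⟩
  · rintro ⟨h1, h2⟩
    exact ⟨fun h => h1 (Or.inl h), fun h => h1 (Or.inr h),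
      fun b hb => h2 b (Or.inl hb), fun r hr => h2 r (Or.inr hr)⟩

/-- Relabelling built from equivalences in the reverse direction. -/
def relabMk {x y : SetTheory.PGame.{u}} (L : y.LeftMoves ≃ x.LeftMoves)
    (R : y.RightMoves ≃ x.RightMoves)
    (hL : ∀ i, SetTheory.PGame.Relabelling (x.moveLeft (L i)) (y.moveLeft i))
    (hR : ∀ j, SetTheory.PGame.Relabelling (x.moveRight (R j)) (y.moveRight j)) :
    SetTheory.PGame.Relabelling x y :=
  SetTheory.PGame.Relabelling.mk L.symm R.symm
    (fun i => by have := hL (L.symm i); rwa [L.apply_symm_apply] at this)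
    (fun j => by have := hR (R.symm j); rwa [R.apply_symm_apply] at this)

theorem leLF_A (x : SetTheory.PGame.{u}) :
    (x.leLF 0).1 ↔ ∀ i, ((x.moveLeft i).leLF 0).2 := by
  cases x with
  | mk xl xr xL xR => exact ⟨fun h => h.1, fun h => ⟨h, fun j => j.elim⟩⟩

theorem leLF_B (x : SetTheory.PGame.{u}) :
    (x.leLF 0).2 ↔ ∃ j, ((x.moveRight j).leLF 0).1 := by
  cases x with
  | mk xl xr xL xR =>
    exact ⟨fun h => h.elim (fun ⟨i, _⟩ => i.elim) id, fun h => Or.inr h⟩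

theorem leLF_C (x : SetTheory.PGame.{u}) :
    ((0 : SetTheory.PGame.{u}).leLF x).1 ↔ ∀ j, ((0 : SetTheory.PGame.{u}).leLF (x.moveRight j)).2 := by
  cases x with
  | mk xl xr xL xR => exact ⟨fun h => h.2, fun h => ⟨fun i => i.elim, h⟩⟩

theorem leLF_D (x : SetTheory.PGame.{u}) :
    ((0 : SetTheory.PGame.{u}).leLF x).2 ↔ ∃ i, ((0 : SetTheory.PGame.{u}).leLF (x.moveLeft i)).1 := by
  cases x with
  | mk xl xr xL xR =>
    exact ⟨fun h => h.elim id (fun ⟨j, _⟩ => j.elim), fun h => Or.inl h⟩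

theorem relab_zero {x y : SetTheory.PGame.{u}} (r : SetTheory.PGame.Relabelling x y) :
    ((x.leLF 0).1 ↔ (y.leLF 0).1) ∧ ((x.leLF 0).2 ↔ (y.leLF 0).2) ∧
    (((0 : SetTheory.PGame.{u}).leLF x).1 ↔ ((0 : SetTheory.PGame.{u}).leLF y).1) ∧
    (((0 : SetTheory.PGame.{u}).leLF x).2 ↔ ((0 : SetTheory.PGame.{u}).leLF y).2) := by
  induction r with
  | mk L R hL hR ihL ihR =>
    refine ⟨?_, ?_, ?_, ?_⟩
    · rw [leLF_A, leLF_A]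
      exact ⟨fun h i => by
          have := (ihL (L.symm i)).2.1.1 (h _); rwa [L.apply_symm_apply] at this,
        fun h i => (ihL i).2.1.2 (h (L i))⟩
    · rw [leLF_B, leLF_B]
      exact ⟨fun ⟨j, hj⟩ => ⟨R j, (ihR j).1.1 hj⟩, fun ⟨j, hj⟩ =>
        ⟨R.symm j, (ihR (R.symm j)).1.2 (by rwa [R.apply_symm_apply])⟩⟩
    · rw [leLF_C, leLF_C]
      exact ⟨fun h j => by
          have := (ihR (R.symm j)).2.2.2.1 (h _); rwa [R.apply_symm_apply] at this,
        fun h j => (ihR j).2.2.2.2 (h (R j))⟩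
    · rw [leLF_D, leLF_D]
      exact ⟨fun ⟨i, hi⟩ => ⟨L i, (ihL i).2.2.1.1 hi⟩, fun ⟨i, hi⟩ =>
        ⟨L.symm i, (ihL (L.symm i)).2.2.1.2 (by rwa [L.apply_symm_apply])⟩⟩

open SetTheory.PGame in
/-- The recursive relabelling between the distance game and Node-Kayles. -/
noncomputable def relabAux {V W : Type u} [Fintype V] [DecidableEq V] [Fintype W] [DecidableEq W]
    (D S : Set ℕ) (G : SimpleGraph V) (G' : SimpleGraph W) (ι : V ↪ W) (Blue0 Red0 : Finset W)
    (key : ∀ (B R : Finset V) (w : W),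
      (LeftMove G' D S (Blue0 ∪ B.map ι) (Red0 ∪ R.map ι) w ↔
        ∃ x : V, w = ι x ∧ LeftMove G {1} ({1} : Set ℕ) B R x) ∧
      (RightMove G' D S (Blue0 ∪ B.map ι) (Red0 ∪ R.map ι) w ↔
        ∃ x : V, w = ι x ∧ RightMove G {1} ({1} : Set ℕ) B R x))
    (B R : Finset V) :
    distGame G' D S (Blue0 ∪ B.map ι) (Red0 ∪ R.map ι) ≡r distGame G {1} ({1} : Set ℕ) B R := by
  rw [distGame, distGame]
  refine relabMk
    (Equiv.ofBijective (fun x : {x // LeftMove G {1} ({1} : Set ℕ) B R x} =>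
      (⟨ι x.1, (key B R (ι x.1)).1.2 ⟨x.1, rfl, x.2⟩⟩ :
        {w // LeftMove G' D S (Blue0 ∪ B.map ι) (Red0 ∪ R.map ι) w})) ⟨?_, ?_⟩)
    (Equiv.ofBijective (fun x : {x // RightMove G {1} ({1} : Set ℕ) B R x} =>
      (⟨ι x.1, (key B R (ι x.1)).2.2 ⟨x.1, rfl, x.2⟩⟩ :
        {w // RightMove G' D S (Blue0 ∪ B.map ι) (Red0 ∪ R.map ι) w})) ⟨?_, ?_⟩)
    ?_ ?_
  · intro a b h
    exact Subtype.ext (ι.injective (congrArg Subtype.val h))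
  · rintro ⟨w, hw⟩
    obtain ⟨x, rfl, hx⟩ := (key B R w).1.1 hw
    exact ⟨⟨x, hx⟩, rfl⟩
  · intro a b h
    exact Subtype.ext (ι.injective (congrArg Subtype.val h))
  · rintro ⟨w, hw⟩
    obtain ⟨x, rfl, hx⟩ := (key B R w).2.1 hw
    exact ⟨⟨x, hx⟩, rfl⟩
  · intro i
    show distGame G' D S (insert (ι i.1) (Blue0 ∪ B.map ι)) (Red0 ∪ R.map ι) ≡r
      distGame G {1} ({1} : Set ℕ) (insert i.1 B) R
    rw [show insert (ι i.1) (Blue0 ∪ B.map ι) = Blue0 ∪ (insert i.1 B).map ι from by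
      rw [Finset.map_insert, Finset.union_insert]]
    exact relabAux D S G G' ι Blue0 Red0 key (insert i.1 B) R
  · intro i
    show distGame G' D S (Blue0 ∪ B.map ι) (insert (ι i.1) (Red0 ∪ R.map ι)) ≡r
      distGame G {1} ({1} : Set ℕ) B (insert i.1 R)
    rw [show insert (ι i.1) (Red0 ∪ R.map ι) = Red0 ∪ (insert i.1 R).map ι from by
      rw [Finset.map_insert, Finset.union_insert]]
    exact relabAux D S G G' ι Blue0 Red0 key B (insert i.1 R)
termination_by ((B ∪ R)ᶜ).card
decreasing_by
  · obtain ⟨h1, h2, -, -⟩ := i.2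
    calc ((insert i.1 B ∪ R)ᶜ).card
        = (((B ∪ R)ᶜ).erase i.1).card := by
          rw [Finset.insert_union, Finset.compl_insert]
      _ < ((B ∪ R)ᶜ).card :=
          Finset.card_erase_lt_of_mem (Finset.mem_compl.2 (by simp [h1, h2]))
  · obtain ⟨h1, h2, -, -⟩ := i.2
    calc ((B ∪ insert i.1 R)ᶜ).card
        = (((B ∪ R)ᶜ).erase i.1).card := by
          rw [Finset.union_insert, Finset.compl_insert]
      _ < ((B ∪ R)ᶜ).card :=
          Finset.card_erase_lt_of_mem (Finset.mem_compl.2 (by simp [h1, h2]))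


open SetTheory.PGame in
/-- for `D, S ⊆ {1,…,m}` with `m ∈ D`, `m ∈ S` and at least one of `D`, `S`
equal to `{1,…,m}`, under hypotheses (a)–(d), the distance game `D⟨D,S⟩` on `G'` starting
from the position with blue pieces on `Blue0` and red pieces on `Red0` is play-for-play
equivalent to `Node-Kayles = D⟨{1},{1}⟩` on `G` starting from the empty position. -/
theorem stmt11 {V W : Type u} [Fintype V] [DecidableEq V] [Fintype W] [DecidableEq W]
    (m : ℕ) (hm : 1 ≤ m) (D S : Set ℕ)
    (hD : D ⊆ Set.Icc 1 m) (hS : S ⊆ Set.Icc 1 m) (hmD : m ∈ D) (hmS : m ∈ S)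
    (hfull : D = Set.Icc 1 m ∨ S = Set.Icc 1 m)
    (G : SimpleGraph V) (G' : SimpleGraph W) (ι : V ↪ W)
    (Blue0 Red0 : Finset W) (hBR : Disjoint Blue0 Red0)
    (hB0 : ∀ v : V, ι v ∉ Blue0) (hR0 : ∀ v : V, ι v ∉ Red0)
    -- (a) every extra vertex is within distance `m` of `Blue0` and of `Red0`:
    (ha : ∀ w : W, (∀ v : V, ι v ≠ w) → w ∉ Blue0 → w ∉ Red0 →
      (∃ b ∈ Blue0, G'.edist w b ≤ (m : ℕ∞)) ∧ (∃ r ∈ Red0, G'.edist w r ≤ (m : ℕ∞)))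
    -- (b) every vertex of `V(G)` is at distance at least `m+1` from `Blue0 ∪ Red0`:
    (hb : ∀ v : V, ∀ w ∈ Blue0 ∪ Red0, (m : ℕ∞) + 1 ≤ G'.edist (ι v) w)
    -- (c) distances between vertices of `V(G)`:
    (hc : ∀ u v : V, u ≠ v →
      (G.Adj u v → G'.edist (ι u) (ι v) = (m : ℕ∞)) ∧
      (¬G.Adj u v → (m : ℕ∞) + 1 ≤ G'.edist (ι u) (ι v)))
    -- (d) distinct vertices of `Blue0 ∪ Red0` are at distance at least `m+1`:
    (hd : ∀ w₁ ∈ Blue0 ∪ Red0, ∀ w₂ ∈ Blue0 ∪ Red0, w₁ ≠ w₂ →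
      (m : ℕ∞) + 1 ≤ G'.edist w₁ w₂) :
    -- in every position of the correspondence, the sets of vertices legally playable by
    -- Left and by Right coincide and equal the set of unoccupied vertices of `V(G)` that
    -- are not `G`-adjacent to any occupied vertex of `V(G)`:
    (∀ B R : Finset V, Disjoint B R → ∀ w : W,
      (LeftMove G' D S (Blue0 ∪ B.map ι) (Red0 ∪ R.map ι) w ↔
        ∃ x : V, w = ι x ∧ x ∉ B ∪ R ∧ ∀ u ∈ B ∪ R, ¬G.Adj x u) ∧
      (RightMove G' D S (Blue0 ∪ B.map ι) (Red0 ∪ R.map ι) w ↔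
        ∃ x : V, w = ι x ∧ x ∉ B ∪ R ∧ ∀ u ∈ B ∪ R, ¬G.Adj x u)) ∧
    -- the two games are play-for-play equivalent:
    Nonempty (distGame G' D S Blue0 Red0 ≡r
      distGame G {1} ({1} : Set ℕ) (∅ : Finset V) (∅ : Finset V)) ∧
    -- in particular, the player moving first (respectively, second) has a winning strategy
    -- in one game iff in the other:
    ((0 ⧏ distGame G' D S Blue0 Red0 ↔
        0 ⧏ distGame G {1} ({1} : Set ℕ) (∅ : Finset V) (∅ : Finset V)) ∧
      (0 ≤ distGame G' D S Blue0 Red0 ↔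
        0 ≤ distGame G {1} ({1} : Set ℕ) (∅ : Finset V) (∅ : Finset V)) ∧
      (distGame G' D S Blue0 Red0 ⧏ 0 ↔
        distGame G {1} ({1} : Set ℕ) (∅ : Finset V) (∅ : Finset V) ⧏ 0) ∧
      (distGame G' D S Blue0 Red0 ≤ 0 ↔
        distGame G {1} ({1} : Set ℕ) (∅ : Finset V) (∅ : Finset V) ≤ 0)) := by
  have key : ∀ (B R : Finset V) (w : W),
      (LeftMove G' D S (Blue0 ∪ B.map ι) (Red0 ∪ R.map ι) w ↔
        ∃ x : V, w = ι x ∧ x ∉ B ∪ R ∧ ∀ u ∈ B ∪ R, ¬G.Adj x u) ∧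
      (RightMove G' D S (Blue0 ∪ B.map ι) (Red0 ∪ R.map ι) w ↔
        ∃ x : V, w = ι x ∧ x ∉ B ∪ R ∧ ∀ u ∈ B ∪ R, ¬G.Adj x u) := by
    intro B R w
    constructor
    · exact moveChar m D S hD hS hmD hmS hfull G G' ι Blue0 Red0 hB0 hR0 ha hb hc B R w
    · have hswap : RightMove G' D S (Blue0 ∪ B.map ι) (Red0 ∪ R.map ι) w ↔
          LeftMove G' D S (Red0 ∪ R.map ι) (Blue0 ∪ B.map ι) w := by
        unfold LeftMove RightMove; tauto
      rw [hswap, moveChar m D S hD hS hmD hmS hfull G G' ι Red0 Blue0 hR0 hB0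
        (fun w h1 h2 h3 => ⟨(ha w h1 h3 h2).2, (ha w h1 h3 h2).1⟩)
        (fun v w hw => hb v w (by rwa [Finset.union_comm] at hw)) hc R B w,
        Finset.union_comm R B]
  have key2 : ∀ (B R : Finset V) (w : W),
      (LeftMove G' D S (Blue0 ∪ B.map ι) (Red0 ∪ R.map ι) w ↔
        ∃ x : V, w = ι x ∧ LeftMove G {1} ({1} : Set ℕ) B R x) ∧
      (RightMove G' D S (Blue0 ∪ B.map ι) (Red0 ∪ R.map ι) w ↔
        ∃ x : V, w = ι x ∧ RightMove G {1} ({1} : Set ℕ) B R x) := by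
    intro B R w
    refine ⟨(key B R w).1.trans ?_, (key B R w).2.trans ?_⟩
    · exact exists_congr fun x => and_congr_right fun _ => (nkLeft G B R x).symm
    · exact exists_congr fun x => and_congr_right fun _ => (nkRight G B R x).symm
  have rel := relabAux D S G G' ι Blue0 Red0 key2 ∅ ∅
  simp only [Finset.map_empty, Finset.union_empty] at rel
  have hP := relab_zero rel
  exact ⟨fun B R _ w => key B R w, ⟨rel⟩,
    not_congr hP.1, hP.2.2.1,
    not_congr hP.2.2.1, hP.1⟩
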